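/- Let v be a real-valued random variable with values in [vmin, vmax] where 0 ≤ vmin < vmax, and define G*(r) := 1 if r > E[v] and G*(r) := 0 otherwise. Then Ĝ*(x) = max(0, x − E[v]) for every x ≥ 0, and consequently E[Ĝ*(v)] − Ĝ*(E[v]) = E[max(0, v − E[v])], i.e., the step cdf G* attains the maximal net utility E[max(0, v − E[v])]. -/

import Mathlib

open MeasureTheory Set

/-- `Ĝ(x) := ∫_0^x G(r) dr`. -/
noncomputable def Ghat (G : ℝ → ℝ) (x : ℝ) : ℝ := ∫ r in (0 : ℝ)..x, G r

lemma step_integral (m x : ℝ) (hm : 0 ≤ m) (hx : 0 ≤ x) :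
    (∫ r in (0:ℝ)..x, (if m < r then (1:ℝ) else 0)) = max 0 (x - m) := by
  have hind : (fun r : ℝ => if m < r then (1:ℝ) else 0) = (Ioi m).indicator (fun _ => 1) := by
    funext r; simp [Set.indicator_apply, mem_Ioi]
  have hInt : ∀ a b : ℝ, IntervalIntegrable (fun r : ℝ => if m < r then (1:ℝ) else 0) volume a b := by
    intro a b
    rw [hind, intervalIntegrable_iff]
    exact (integrableOn_const measure_Ioc_lt_top.ne).indicator measurableSet_Ioi
  rcases le_or_gt x m with h | h
  · have : (∫ r in (0:ℝ)..x, (if m < r then (1:ℝ) else 0)) = ∫ r in (0:ℝ)..x, (0:ℝ) := by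
      apply intervalIntegral.integral_congr
      intro r hr
      rw [uIcc_of_le hx] at hr
      simp [not_lt.2 (hr.2.trans h)]
    rw [this, intervalIntegral.integral_zero]
    exact (max_eq_left (by linarith)).symm
  · have hsplit := intervalIntegral.integral_add_adjacent_intervals (hInt 0 m) (hInt m x)
    have h1 : (∫ r in (0:ℝ)..m, (if m < r then (1:ℝ) else 0)) = 0 := by
      have : (∫ r in (0:ℝ)..m, (if m < r then (1:ℝ) else 0)) = ∫ r in (0:ℝ)..m, (0:ℝ) := by
        apply intervalIntegral.integral_congr
        intro r hr
        rw [uIcc_of_le hm] at hr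
        simp [not_lt.2 hr.2]
      simp [this]
    have h2 : (∫ r in m..x, (if m < r then (1:ℝ) else 0)) = x - m := by
      have : (∫ r in m..x, (if m < r then (1:ℝ) else 0)) = ∫ r in m..x, (1:ℝ) := by
        apply intervalIntegral.integral_congr_ae
        filter_upwards with r hr
        rw [uIoc_of_le h.le] at hr
        simp [hr.1]
      rw [this]; simp
    rw [← hsplit, h1, h2, max_eq_right (by linarith), zero_add]

theorem step_cdf_attains_max_net_utility
    {Ω : Type*} [MeasurableSpace Ω] (μ : Measure Ω) [IsProbabilityMeasure μ]
    (vmin vmax : ℝ) (h0 : 0 ≤ vmin) (h1 : vmin < vmax)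
    (v : Ω → ℝ) (hv : ∀ ω, v ω ∈ Icc vmin vmax) (hmv : Measurable v)
    (Gstar : ℝ → ℝ)
    (hGstar : Gstar = fun r => if (∫ ω, v ω ∂μ) < r then 1 else 0) :
    (∀ x : ℝ, 0 ≤ x → Ghat Gstar x = max 0 (x - ∫ ω, v ω ∂μ)) ∧
      (∫ ω, Ghat Gstar (v ω) ∂μ) - Ghat Gstar (∫ ω, v ω ∂μ)
        = ∫ ω, max 0 (v ω - ∫ ω', v ω' ∂μ) ∂μ := by
  set m := ∫ ω, v ω ∂μ with hm
  have hvint : Integrable v μ := by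
    apply (integrable_const (max vmax (-vmin))).mono' hmv.aestronglyMeasurable
    filter_upwards with ω
    have := hv ω
    rw [Real.norm_eq_abs, abs_le]
    refine ⟨?_, ?_⟩
    · have h' := le_max_right vmax (-vmin); linarith [this.1]
    · have h' := le_max_left vmax (-vmin); linarith [this.2]
  have hm0 : 0 ≤ m := by
    have : (0:ℝ) = ∫ _ : Ω, (0:ℝ) ∂μ := by simp
    rw [hm, this]
    apply integral_mono (integrable_const 0) hvint
    intro ω; exact le_trans h0 (hv ω).1
  have key : ∀ x : ℝ, 0 ≤ x → Ghat Gstar x = max 0 (x - m) := by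
    intro x hx
    rw [Ghat, hGstar]
    exact step_integral m x hm0 hx
  refine ⟨key, ?_⟩
  have h2 : Ghat Gstar m = 0 := by
    rw [key m hm0]; simp
  rw [h2, sub_zero]
  apply integral_congr_ae
  filter_upwards with ω
  exact key (v ω) (le_trans h0 (hv ω).1)
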